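/- Let p be an odd prime and let θ ∈ ℤ_pˣ be a unit which is not a square in ℚ_p. Put v₁ = (2θ, 0, 0, 1, 1) ∈ ℚ_p⁵, and for r ∈ ℕ let d_r = diag(p^r, 1, 1, 1, p^{−r}). Let x = (x₁,…,x₅) ∈ ℚ_p⁵ satisfy 2x₁x₅ + 2x₂x₄ + x₃² = 4θ. Then for every r ∈ ℕ: there exists k ∈ K with k·(d_r·v₁) = x if and only if max_{1≤i≤5} ‖x_i‖ = p^r. Consequently every point of the sphere {v ∈ ℚ_p⁵ : 2v₁v₅ + 2v₂v₄ + v₃² = 4θ} lies in exactly one K-orbit K·(d_r·v₁), r ≥ 0. -/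

import Mathlib

open Matrix

noncomputable section

variable (p : ℕ) [Fact p.Prime]

/-- The 5×5 matrix `J` over `ℚ_p`. -/
def J5 : Matrix (Fin 5) (Fin 5) ℚ_[p] :=
  Matrix.of fun i j => if (i : ℕ) + (j : ℕ) = 4 then 1 else 0

/-- The maximal compact subgroup `K = SO(3,2;ℤ_p)` of `G`. -/
def Kgp : Set (Matrix (Fin 5) (Fin 5) ℚ_[p]) :=
  {g | gᵀ * J5 p * g = J5 p ∧ g.det = 1 ∧ ∀ i j, ‖g i j‖ ≤ 1}

/-- The matrix `d_r = diag(p^r, 1, 1, 1, p^{−r})`. -/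
def dmat (r : ℕ) : Matrix (Fin 5) (Fin 5) ℚ_[p] :=
  Matrix.diagonal ![(p : ℚ_[p]) ^ r, 1, 1, 1, ((p : ℚ_[p]) ^ r)⁻¹]

namespace St7

/-- The quadratic form. -/
def Qf (v : Fin 5 → ℚ_[p]) : ℚ_[p] := 2 * v 0 * v 4 + 2 * v 1 * v 3 + v 2 ^ 2

theorem J5_eq : J5 p = !![0,0,0,0,1; 0,0,0,1,0; 0,0,1,0,0; 0,1,0,0,0; 1,0,0,0,0] := by
  ext i j; fin_cases i <;> fin_cases j <;> rfl

theorem J5_symm : (J5 p)ᵀ = J5 p := by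
  rw [J5_eq]; ext i j; fin_cases i <;> fin_cases j <;> rfl

set_option maxHeartbeats 1000000 in
theorem J5_det : (J5 p).det = 1 := by
  rw [J5_eq]
  simp [Matrix.det_succ_row_zero, Fin.sum_univ_succ]
  simp [Fin.succAbove, Fin.lt_def]
  norm_num

theorem quad_eq (v : Fin 5 → ℚ_[p]) : v ⬝ᵥ (J5 p).mulVec v = Qf p v := by
  rw [J5_eq]
  simp [Qf, Matrix.mulVec, dotProduct, Fin.sum_univ_five, Matrix.vecHead, Matrix.vecTail]
  ring

theorem sym_ext (A B : Matrix (Fin 5) (Fin 5) ℚ_[p]) (hA : Aᵀ = A) (hB : Bᵀ = B)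
    (h : ∀ v, v ⬝ᵥ A.mulVec v = v ⬝ᵥ B.mulVec v) : A = B := by
  ext i j
  have h1 := h (Pi.single i 1)
  have h2 := h (Pi.single j 1)
  have h3 := h (Pi.single i 1 + Pi.single j 1)
  simp only [Matrix.mulVec_add, dotProduct_add, add_dotProduct,
    Matrix.mulVec_single_one, Matrix.col_apply, single_dotProduct, one_mul, mul_one] at h1 h2 h3
  have haji : A j i = A i j := (congrFun (congrFun hA j) i).symm
  have hbji : B j i = B i j := (congrFun (congrFun hB j) i).symm
  have h2' : (2 : ℚ_[p]) * A i j = 2 * B i j := by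
    linear_combination h3 - h1 - h2 - haji + hbji
  exact mul_left_cancel₀ two_ne_zero h2'

theorem quad_of_matrix (g : Matrix (Fin 5) (Fin 5) ℚ_[p]) (v : Fin 5 → ℚ_[p]) :
    v ⬝ᵥ (gᵀ * J5 p * g).mulVec v = Qf p (g.mulVec v) := by
  rw [← quad_eq]
  rw [← Matrix.mulVec_mulVec, ← Matrix.mulVec_mulVec, Matrix.dotProduct_mulVec,
    Matrix.vecMul_transpose]

theorem mem_Kgp_of (g : Matrix (Fin 5) (Fin 5) ℚ_[p]) (hdet : g.det = 1)
    (hint : ∀ i j, ‖g i j‖ ≤ 1) (hQ : ∀ v, Qf p (g.mulVec v) = Qf p v) : g ∈ Kgp p := by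
  refine ⟨?_, hdet, hint⟩
  refine sym_ext p _ _ ?_ (J5_symm p) ?_
  · simp [Matrix.transpose_mul, J5_symm, Matrix.mul_assoc]
  · intro v
    rw [quad_of_matrix, quad_eq, hQ]

theorem quad_inv {g : Matrix (Fin 5) (Fin 5) ℚ_[p]} (hg : g ∈ Kgp p) (v : Fin 5 → ℚ_[p]) :
    Qf p (g.mulVec v) = Qf p v := by
  rw [← quad_of_matrix, hg.1, quad_eq]

theorem norm5 {a b c d e : ℚ_[p]} {M : ℝ} (ha : ‖a‖ ≤ M) (hb : ‖b‖ ≤ M) (hc : ‖c‖ ≤ M)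
    (hd : ‖d‖ ≤ M) (he : ‖e‖ ≤ M) : ‖a + b + c + d + e‖ ≤ M := by
  refine le_trans (Padic.nonarchimedean _ _) (max_le (le_trans (Padic.nonarchimedean _ _) (max_le (le_trans (Padic.nonarchimedean _ _) (max_le (le_trans (Padic.nonarchimedean _ _) (max_le ha hb)) hc)) hd)) he)

theorem det_norm_le (M : Matrix (Fin 5) (Fin 5) ℚ_[p]) (h : ∀ i j, ‖M i j‖ ≤ 1) :
    ‖M.det‖ ≤ 1 := by
  rw [Matrix.det_apply']
  refine IsUltrametricDist.norm_sum_le_of_forall_le_of_nonempty Finset.univ_nonempty ?_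
  intro σ _
  rw [norm_mul]
  have h1 : ‖((Equiv.Perm.sign σ : ℤ) : ℚ_[p])‖ ≤ 1 := by
    rcases Int.units_eq_one_or (Equiv.Perm.sign σ) with hs | hs <;> simp [hs]
  have h2 : ‖∏ i, M (σ i) i‖ ≤ 1 := by
    rw [norm_prod]
    exact Finset.prod_le_one (fun i _ => norm_nonneg _) (fun i _ => h _ _)
  calc ‖((Equiv.Perm.sign σ : ℤ) : ℚ_[p])‖ * ‖∏ i, M (σ i) i‖ ≤ 1 * 1 :=
        mul_le_mul h1 h2 (norm_nonneg _) zero_le_one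
    _ = 1 := by norm_num

theorem mul_mem {g h : Matrix (Fin 5) (Fin 5) ℚ_[p]} (hg : g ∈ Kgp p) (hh : h ∈ Kgp p) :
    g * h ∈ Kgp p := by
  refine ⟨?_, by rw [Matrix.det_mul, hg.2.1, hh.2.1, one_mul], ?_⟩
  · rw [Matrix.transpose_mul]
    calc hᵀ * gᵀ * (J5 p) * (g * h) = hᵀ * (gᵀ * J5 p * g) * h := by
          simp only [Matrix.mul_assoc]
      _ = J5 p := by rw [hg.1, hh.1]
  · intro i j
    rw [Matrix.mul_apply, Fin.sum_univ_five]
    have b : ∀ k, ‖g i k * h k j‖ ≤ 1 := fun k => by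
      rw [norm_mul]
      exact mul_le_one₀ (hg.2.2 i k) (norm_nonneg _) (hh.2.2 k j)
    exact norm5 p (b 0) (b 1) (b 2) (b 3) (b 4)

theorem adj_mem {g : Matrix (Fin 5) (Fin 5) ℚ_[p]} (hg : g ∈ Kgp p) :
    g.adjugate ∈ Kgp p ∧ g.adjugate * g = 1 ∧ g * g.adjugate = 1 := by
  have hinv1 : g.adjugate * g = 1 := by rw [Matrix.adjugate_mul, hg.2.1, one_smul]
  have hinv2 : g * g.adjugate = 1 := by rw [Matrix.mul_adjugate, hg.2.1, one_smul]
  refine ⟨⟨?_, ?_, ?_⟩, hinv1, hinv2⟩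
  · calc g.adjugateᵀ * J5 p * g.adjugate = g.adjugateᵀ * (gᵀ * J5 p * g) * g.adjugate := by
          rw [hg.1]
      _ = (g * g.adjugate)ᵀ * J5 p * (g * g.adjugate) := by
          rw [Matrix.transpose_mul]; simp only [Matrix.mul_assoc]
      _ = J5 p := by rw [hinv2]; simp
  · rw [Matrix.det_adjugate, hg.2.1, one_pow]
  · intro i j
    rw [Matrix.adjugate_apply]
    refine det_norm_le p _ ?_
    intro i' j'
    rw [Matrix.updateRow_apply]
    split
    · rw [Pi.single_apply]; split <;> simp
    · exact hg.2.2 i' j'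

theorem one_mem : (1 : Matrix (Fin 5) (Fin 5) ℚ_[p]) ∈ Kgp p := by
  refine ⟨by simp, by simp, ?_⟩
  intro i j
  rw [Matrix.one_apply]
  split <;> simp

theorem compose {g : Matrix (Fin 5) (Fin 5) ℚ_[p]} {y z : Fin 5 → ℚ_[p]} (hg : g ∈ Kgp p)
    (h : ∃ h ∈ Kgp p, h.mulVec (g.mulVec y) = z) : ∃ k ∈ Kgp p, k.mulVec y = z := by
  obtain ⟨h, hh, hz⟩ := h
  exact ⟨h * g, mul_mem p hh hg, by rw [← Matrix.mulVec_mulVec]; exact hz⟩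

theorem norm_two (hp : p ≠ 2) : ‖(2 : ℚ_[p])‖ = 1 := by
  have h1 : ‖((2 : ℤ) : ℚ_[p])‖ ≤ 1 := Padic.norm_int_le_one 2
  have h2 : ¬ ‖((2 : ℤ) : ℚ_[p])‖ < 1 := by
    rw [Padic.norm_intCast_lt_one_iff]
    intro hdvd
    have hd : p ∣ 2 := by exact_mod_cast hdvd
    exact hp ((Nat.prime_dvd_prime_iff_eq Fact.out Nat.prime_two).1 hd)
  have h3 : ‖((2 : ℤ) : ℚ_[p])‖ = 1 := le_antisymm h1 (not_lt.1 h2)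
  simpa using h3

theorem norm_half (hp : p ≠ 2) : ‖((2 : ℚ_[p])⁻¹)‖ = 1 := by
  rw [norm_inv, norm_two p hp]; norm_num

/-- diag(a,1,1,1,a⁻¹) -/
def matT (a : ℚ_[p]) : Matrix (Fin 5) (Fin 5) ℚ_[p] := Matrix.diagonal ![a, 1, 1, 1, a⁻¹]

theorem matT_mulVec (a : ℚ_[p]) (v : Fin 5 → ℚ_[p]) :
    (matT p a).mulVec v = ![a * v 0, v 1, v 2, v 3, a⁻¹ * v 4] := by
  funext i; fin_cases i <;>
    simp [matT, Matrix.mulVec_diagonal]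

theorem matT_mem {a : ℚ_[p]} (ha : ‖a‖ = 1) : matT p a ∈ Kgp p := by
  have ha0 : a ≠ 0 := by intro h; rw [h] at ha; simp at ha
  refine mem_Kgp_of p _ ?_ ?_ ?_
  · rw [matT, Matrix.det_diagonal, Fin.prod_univ_five]
    simp [mul_inv_cancel₀ ha0]
  · intro i j
    rw [matT, Matrix.diagonal_apply]
    split
    · fin_cases i <;> simp [ha, norm_inv]
    · simp
  · intro v
    rw [matT_mulVec]
    simp only [Qf]
    simp
    field_simp


def matA (t : ℚ_[p]) : Matrix (Fin 5) (Fin 5) ℚ_[p] :=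
  !![1,0,0,-t,0; 0,1,0,0,t; 0,0,1,0,0; 0,0,0,1,0; 0,0,0,0,1]

def matB (t : ℚ_[p]) : Matrix (Fin 5) (Fin 5) ℚ_[p] :=
  !![1,-t,0,0,0; 0,1,0,0,0; 0,0,1,0,0; 0,0,0,1,t; 0,0,0,0,1]

def matC (t : ℚ_[p]) : Matrix (Fin 5) (Fin 5) ℚ_[p] :=
  !![1,0,-t,0,-(2⁻¹*t^2); 0,1,0,0,0; 0,0,1,0,t; 0,0,0,1,0; 0,0,0,0,1]

def matD : Matrix (Fin 5) (Fin 5) ℚ_[p] :=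
  !![1,0,0,0,0; 0,1,0,0,0; 1,0,1,0,0; 0,0,0,1,0; -2⁻¹,0,-1,0,1]

def matW : Matrix (Fin 5) (Fin 5) ℚ_[p] :=
  !![0,1,0,0,0; 1,0,0,0,0; 0,0,1,0,0; 0,0,0,0,1; 0,0,0,1,0]

theorem matA_mulVec (t : ℚ_[p]) (v : Fin 5 → ℚ_[p]) :
    (matA p t).mulVec v = ![v 0 - t * v 3, v 1 + t * v 4, v 2, v 3, v 4] := by
  funext i; fin_cases i <;>
    simp [matA, Matrix.mulVec, dotProduct, Fin.sum_univ_five] <;> ring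

theorem matB_mulVec (t : ℚ_[p]) (v : Fin 5 → ℚ_[p]) :
    (matB p t).mulVec v = ![v 0 - t * v 1, v 1, v 2, v 3 + t * v 4, v 4] := by
  funext i; fin_cases i <;>
    simp [matB, Matrix.mulVec, dotProduct, Fin.sum_univ_five] <;> ring

theorem matC_mulVec (t : ℚ_[p]) (v : Fin 5 → ℚ_[p]) :
    (matC p t).mulVec v = ![v 0 - t * v 2 - 2⁻¹ * t^2 * v 4, v 1, v 2 + t * v 4, v 3, v 4] := by
  funext i; fin_cases i <;>
    simp [matC, Matrix.mulVec, dotProduct, Fin.sum_univ_five] <;> ring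

theorem matD_mulVec (v : Fin 5 → ℚ_[p]) :
    (matD p).mulVec v = ![v 0, v 1, v 2 + v 0, v 3, v 4 - v 2 - 2⁻¹ * v 0] := by
  funext i; fin_cases i <;>
    simp [matD, Matrix.mulVec, dotProduct, Fin.sum_univ_five] <;> ring

theorem matW_mulVec (v : Fin 5 → ℚ_[p]) :
    (matW p).mulVec v = ![v 1, v 0, v 2, v 4, v 3] := by
  funext i; fin_cases i <;>
    simp [matW, Matrix.mulVec, dotProduct, Fin.sum_univ_five]

theorem J5_mulVec (v : Fin 5 → ℚ_[p]) :
    (J5 p).mulVec v = ![v 4, v 3, v 2, v 1, v 0] := by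
  rw [J5_eq]
  funext i; fin_cases i <;>
    simp [Matrix.mulVec, dotProduct, Fin.sum_univ_five]

theorem matA_mem {t : ℚ_[p]} (ht : ‖t‖ ≤ 1) : matA p t ∈ Kgp p := by
  refine mem_Kgp_of p _ ?_ ?_ ?_
  · have h : (matA p t).BlockTriangular id := by
      intro i j hij
      fin_cases i <;> fin_cases j <;> first | rfl | exact absurd hij (by decide)
    rw [Matrix.det_of_upperTriangular h]
    simp [matA, Fin.prod_univ_five]
  · intro i j
    fin_cases i <;> fin_cases j <;> simp [matA, Matrix.vecHead, Matrix.vecTail] <;> assumption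
  · intro v
    rw [matA_mulVec]
    simp [Qf]
    ring

theorem matB_mem {t : ℚ_[p]} (ht : ‖t‖ ≤ 1) : matB p t ∈ Kgp p := by
  refine mem_Kgp_of p _ ?_ ?_ ?_
  · have h : (matB p t).BlockTriangular id := by
      intro i j hij
      fin_cases i <;> fin_cases j <;> first | rfl | exact absurd hij (by decide)
    rw [Matrix.det_of_upperTriangular h]
    simp [matB, Fin.prod_univ_five]
  · intro i j
    fin_cases i <;> fin_cases j <;> simp [matB, Matrix.vecHead, Matrix.vecTail] <;> assumption
  · intro v
    rw [matB_mulVec]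
    simp [Qf]
    ring

theorem matC_mem (hp : p ≠ 2) {t : ℚ_[p]} (ht : ‖t‖ ≤ 1) : matC p t ∈ Kgp p := by
  have hhalf : ‖(2⁻¹ * t^2 : ℚ_[p])‖ ≤ 1 := by
    rw [norm_mul, norm_half p hp, one_mul, norm_pow]
    exact pow_le_one₀ (norm_nonneg t) ht
  refine mem_Kgp_of p _ ?_ ?_ ?_
  · have h : (matC p t).BlockTriangular id := by
      intro i j hij
      fin_cases i <;> fin_cases j <;> first | rfl | exact absurd hij (by decide)
    rw [Matrix.det_of_upperTriangular h]
    simp [matC, Fin.prod_univ_five]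
  · intro i j
    fin_cases i <;> fin_cases j <;> simp [matC, Matrix.vecHead, Matrix.vecTail] <;> first | assumption | simpa using hhalf
  · intro v
    rw [matC_mulVec]
    simp [Qf]
    ring

theorem matD_mem (hp : p ≠ 2) : matD p ∈ Kgp p := by
  refine mem_Kgp_of p _ ?_ ?_ ?_
  · have h : (matD p).BlockTriangular OrderDual.toDual := by
      intro i j hij
      fin_cases i <;> fin_cases j <;> first | rfl | exact absurd hij (by decide)
    rw [Matrix.det_of_lowerTriangular _ h]
    simp [matD, Fin.prod_univ_five]
  · intro i j
    fin_cases i <;> fin_cases j <;> simp [matD, Matrix.vecHead, Matrix.vecTail, norm_two p hp]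
  · intro v
    rw [matD_mulVec]
    simp [Qf]
    ring

set_option maxHeartbeats 1000000 in
theorem matW_mem : matW p ∈ Kgp p := by
  refine mem_Kgp_of p _ ?_ ?_ ?_
  · rw [matW]
    simp [Matrix.det_succ_row_zero, Fin.sum_univ_succ]
    simp [Fin.succAbove, Fin.lt_def]
  · intro i j
    fin_cases i <;> fin_cases j <;> simp [matW, Matrix.vecHead, Matrix.vecTail]
  · intro v
    rw [matW_mulVec]
    simp [Qf]
    ring

theorem J5_mem : J5 p ∈ Kgp p := by
  refine mem_Kgp_of p _ (J5_det p) ?_ ?_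
  · intro i j
    rw [J5]
    simp only [Matrix.of_apply]
    split <;> simp
  · intro v
    rw [J5_mulVec]
    simp [Qf]
    ring


theorem norm_small_sub_unit {a b : ℚ_[p]} (ha : ‖a‖ < 1) (hb : ‖b‖ = 1) : ‖a - b‖ = 1 := by
  refine le_antisymm ?_ ?_
  · rw [sub_eq_add_neg]
    refine le_trans (Padic.nonarchimedean _ _) ?_
    rw [norm_neg, hb]
    exact max_le (le_of_lt ha) le_rfl
  · by_contra hlt
    push_neg at hlt
    have h2 : ‖b‖ ≤ max ‖a‖ ‖a - b‖ := by
      have e : b = a + -(a - b) := by ring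
      calc ‖b‖ = ‖a + -(a - b)‖ := by rw [← e]
        _ ≤ max ‖a‖ ‖-(a - b)‖ := Padic.nonarchimedean _ _
        _ = max ‖a‖ ‖a - b‖ := by rw [norm_neg]
    have h3 : (1 : ℝ) ≤ max ‖a‖ ‖a - b‖ := hb ▸ h2
    exact absurd h3 (not_le.2 (max_lt ha hlt))

theorem trans_orbit {y z w : Fin 5 → ℚ_[p]} (h1 : ∃ g ∈ Kgp p, g.mulVec y = z)
    (h2 : ∃ g ∈ Kgp p, g.mulVec z = w) : ∃ g ∈ Kgp p, g.mulVec y = w := by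
  obtain ⟨g, hg, rfl⟩ := h1
  exact compose p hg h2

theorem red1 (hp : p ≠ 2) (y : Fin 5 → ℚ_[p]) (hint : ∀ i, ‖y i‖ ≤ 1) (h4 : y 4 = 1) :
    ∃ g ∈ Kgp p, g.mulVec y = ![2⁻¹ * Qf p y, 0, 0, 0, 1] := by
  refine ⟨matC p (-(y 2)) * (matA p (-(y 1)) * matB p (-(y 3))),
    mul_mem p (matC_mem p hp (by simpa using hint 2))
      (mul_mem p (matA_mem p (by simpa using hint 1)) (matB_mem p (by simpa using hint 3))), ?_⟩
  rw [← Matrix.mulVec_mulVec, ← Matrix.mulVec_mulVec, matB_mulVec, matA_mulVec, matC_mulVec]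
  funext i
  fin_cases i <;> simp [Qf, h4, Matrix.vecHead, Matrix.vecTail] <;> ring

theorem red2 (hp : p ≠ 2) (y : Fin 5 → ℚ_[p]) (hint : ∀ i, ‖y i‖ ≤ 1) (h4 : ‖y 4‖ = 1) :
    ∃ g ∈ Kgp p, g.mulVec y = ![2⁻¹ * Qf p y, 0, 0, 0, 1] := by
  have hy0 : y 4 ≠ 0 := by intro h; rw [h] at h4; simp at h4
  have hstep : ∃ g ∈ Kgp p, g.mulVec y = ![y 4 * y 0, y 1, y 2, y 3, 1] := by
    refine ⟨matT p (y 4), matT_mem p h4, ?_⟩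
    rw [matT_mulVec, inv_mul_cancel₀ hy0]
  have hq : Qf p ![y 4 * y 0, y 1, y 2, y 3, 1] = Qf p y := by
    obtain ⟨g, hg, hz⟩ := hstep
    rw [← hz, quad_inv p hg]
  rw [← hq]
  refine trans_orbit p hstep (red1 p hp _ ?_ (by simp))
  intro i
  fin_cases i <;> simp [Matrix.vecHead, Matrix.vecTail]
  · exact mul_le_one₀ (le_of_eq h4) (norm_nonneg _) (hint 0)
  · exact hint 1
  · exact hint 2
  · exact hint 3

theorem red (hp : p ≠ 2) (y : Fin 5 → ℚ_[p]) (hint : ∀ i, ‖y i‖ ≤ 1)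
    (hunit : ∃ i, ‖y i‖ = 1) :
    ∃ g ∈ Kgp p, g.mulVec y = ![2⁻¹ * Qf p y, 0, 0, 0, 1] := by
  by_cases h4 : ‖y 4‖ = 1
  · exact red2 p hp y hint h4
  by_cases h0 : ‖y 0‖ = 1
  · have hstep : ∃ g ∈ Kgp p, g.mulVec y = ![y 4, y 3, y 2, y 1, y 0] :=
      ⟨J5 p, J5_mem p, J5_mulVec p y⟩
    have hq : Qf p ![y 4, y 3, y 2, y 1, y 0] = Qf p y := by simp [Qf]; ring
    rw [← hq]
    refine trans_orbit p hstep (red2 p hp _ ?_ (by simpa using h0))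
    intro i; fin_cases i <;> simp [Matrix.vecHead, Matrix.vecTail] <;>
      first | exact hint 0 | exact hint 1 | exact hint 2 | exact hint 3 | exact hint 4
  by_cases h3 : ‖y 3‖ = 1
  · have hstep : ∃ g ∈ Kgp p, g.mulVec y = ![y 1, y 0, y 2, y 4, y 3] :=
      ⟨matW p, matW_mem p, matW_mulVec p y⟩
    have hq : Qf p ![y 1, y 0, y 2, y 4, y 3] = Qf p y := by simp [Qf]; ring
    rw [← hq]
    refine trans_orbit p hstep (red2 p hp _ ?_ (by simpa using h3))
    intro i; fin_cases i <;> simp [Matrix.vecHead, Matrix.vecTail] <;>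
      first | exact hint 0 | exact hint 1 | exact hint 2 | exact hint 3 | exact hint 4
  by_cases h1 : ‖y 1‖ = 1
  · have hstep : ∃ g ∈ Kgp p, g.mulVec y = ![y 3, y 4, y 2, y 0, y 1] := by
      refine ⟨J5 p * matW p, mul_mem p (J5_mem p) (matW_mem p), ?_⟩
      rw [← Matrix.mulVec_mulVec, matW_mulVec, J5_mulVec]
      funext i; fin_cases i <;> simp [Matrix.vecHead, Matrix.vecTail]
    have hq : Qf p ![y 3, y 4, y 2, y 0, y 1] = Qf p y := by simp [Qf]; ring
    rw [← hq]
    refine trans_orbit p hstep (red2 p hp _ ?_ (by simpa using h1))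
    intro i; fin_cases i <;> simp [Matrix.vecHead, Matrix.vecTail] <;>
      first | exact hint 0 | exact hint 1 | exact hint 2 | exact hint 3 | exact hint 4
  · -- only y 2 can be a unit
    have h2 : ‖y 2‖ = 1 := by
      obtain ⟨i, hi⟩ := hunit
      fin_cases i <;> first | exact hi | (exfalso; first | exact h0 hi | exact h1 hi | exact h3 hi | exact h4 hi)
    have h0' : ‖y 0‖ < 1 := lt_of_le_of_ne (hint 0) h0
    have h4' : ‖y 4‖ < 1 := lt_of_le_of_ne (hint 4) h4
    have hsm : ‖y 4 - 2⁻¹ * y 0‖ < 1 := by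
      rw [sub_eq_add_neg]
      refine lt_of_le_of_lt (Padic.nonarchimedean _ _) ?_
      rw [norm_neg, norm_mul, norm_half p hp, one_mul]
      exact max_lt h4' h0'
    have hlast : ‖y 4 - y 2 - 2⁻¹ * y 0‖ = 1 := by
      have e : y 4 - y 2 - 2⁻¹ * y 0 = (y 4 - 2⁻¹ * y 0) - y 2 := by ring
      rw [e]
      exact norm_small_sub_unit p hsm h2
    have hstep : ∃ g ∈ Kgp p, g.mulVec y = ![y 0, y 1, y 2 + y 0, y 3, y 4 - y 2 - 2⁻¹ * y 0] :=
      ⟨matD p, matD_mem p hp, matD_mulVec p y⟩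
    have hq : Qf p ![y 0, y 1, y 2 + y 0, y 3, y 4 - y 2 - 2⁻¹ * y 0] = Qf p y := by
      simp [Qf, Matrix.vecHead, Matrix.vecTail]; field_simp; ring
    rw [← hq]
    refine trans_orbit p hstep (red2 p hp _ ?_ (by simpa [Matrix.vecHead, Matrix.vecTail] using hlast))
    intro i
    fin_cases i <;> simp [Matrix.vecHead, Matrix.vecTail]
    · exact hint 0
    · exact hint 1
    · exact le_trans (Padic.nonarchimedean _ _) (max_le (hint 2) (hint 0))
    · exact hint 3
    · exact le_of_eq hlast


theorem dvec (r : ℕ) (θ : ℚ_[p]) :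
    (dmat p r).mulVec ![2*θ, 0, 0, 1, 1] =
      ![(p : ℚ_[p])^r * (2*θ), 0, 0, 1, ((p : ℚ_[p])^r)⁻¹] := by
  funext i
  fin_cases i <;>
    simp [dmat, Matrix.mulVec_diagonal, Matrix.vecHead, Matrix.vecTail]

theorem forward (hp2 : p ≠ 2) (θ : ℚ_[p]) (hθ : ‖θ‖ = 1) (r : ℕ) (x : Fin 5 → ℚ_[p])
    (k : Matrix (Fin 5) (Fin 5) ℚ_[p]) (hk : k ∈ Kgp p)
    (hkx : k.mulVec ((dmat p r).mulVec ![2*θ, 0, 0, 1, 1]) = x) :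
    (∀ i, ‖x i‖ ≤ (p : ℝ) ^ r) ∧ ∃ i, ‖x i‖ = (p : ℝ) ^ r := by
  have hp1 : (1 : ℝ) < p := by exact_mod_cast (Fact.out : p.Prime).one_lt
  set c : ℚ_[p] := (p : ℚ_[p])^r with hc
  have hcnorm : ‖c‖ = (p : ℝ) ^ (-(r:ℤ)) := Padic.norm_p_pow r
  have hcinv : ‖c⁻¹‖ = (p : ℝ) ^ r := by
    rw [norm_inv, hcnorm, ← _root_.zpow_neg, neg_neg, zpow_natCast]
  have hprle : (p:ℝ) ^ (-(r:ℤ)) ≤ (p:ℝ) ^ r := by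
    rw [← zpow_natCast (p:ℝ) r]
    exact zpow_le_zpow_right₀ (le_of_lt hp1) (by omega)
  have hper1 : (1:ℝ) ≤ (p:ℝ) ^ r := one_le_pow₀ (le_of_lt hp1)
  rw [dvec] at hkx
  set t : Fin 5 → ℚ_[p] := ![c * (2*θ), 0, 0, 1, c⁻¹] with ht
  have ht0 : ‖t 0‖ ≤ (p:ℝ)^r := by
    show ‖c * (2*θ)‖ ≤ _
    rw [norm_mul, norm_mul, norm_two p hp2, hθ, hcnorm, mul_one, mul_one]
    exact hprle
  have ht1 : ‖t 1‖ ≤ (p:ℝ)^r := by show ‖(0:ℚ_[p])‖ ≤ _; rw [norm_zero]; linarith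
  have ht2 : ‖t 2‖ ≤ (p:ℝ)^r := by show ‖(0:ℚ_[p])‖ ≤ _; rw [norm_zero]; linarith
  have ht3 : ‖t 3‖ ≤ (p:ℝ)^r := by show ‖(1:ℚ_[p])‖ ≤ _; rw [norm_one]; exact hper1
  have ht4 : ‖t 4‖ ≤ (p:ℝ)^r := by show ‖c⁻¹‖ ≤ _; rw [hcinv]
  have htle : ∀ j, ‖t j‖ ≤ (p:ℝ)^r := by
    intro j; fin_cases j <;> assumption
  have hle : ∀ i, ‖x i‖ ≤ (p : ℝ) ^ r := by
    intro i
    rw [← hkx]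
    have expand : (k.mulVec t) i =
        k i 0 * t 0 + k i 1 * t 1 + k i 2 * t 2 + k i 3 * t 3 + k i 4 * t 4 := by
      simp [Matrix.mulVec, dotProduct, Fin.sum_univ_five]
    rw [expand]
    have key : ∀ j, ‖k i j * t j‖ ≤ (p:ℝ)^r := by
      intro j
      rw [norm_mul]
      exact le_trans (mul_le_of_le_one_left (norm_nonneg _) (hk.2.2 i j)) (htle j)
    exact norm5 p (key 0) (key 1) (key 2) (key 3) (key 4)
  refine ⟨hle, ?_⟩
  have hadj := adj_mem p hk
  have hxt : (k.adjugate).mulVec x = t := by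
    rw [← hkx, Matrix.mulVec_mulVec, hadj.2.1, Matrix.one_mulVec]
  by_contra hno
  push_neg at hno
  have hlt : ∀ i, ‖x i‖ < (p:ℝ)^r := fun i => lt_of_le_of_ne (hle i) (hno i)
  set M := max (max (max (max ‖x 0‖ ‖x 1‖) ‖x 2‖) ‖x 3‖) ‖x 4‖ with hM
  have m0 : ‖x 0‖ ≤ M := le_trans (le_max_left _ _) (le_trans (le_max_left _ _)
    (le_trans (le_max_left _ _) (le_max_left _ _)))
  have m1 : ‖x 1‖ ≤ M := le_trans (le_max_right _ _) (le_trans (le_max_left _ _)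
    (le_trans (le_max_left _ _) (le_max_left _ _)))
  have m2 : ‖x 2‖ ≤ M := le_trans (le_max_right _ _) (le_trans (le_max_left _ _)
    (le_max_left _ _))
  have m3 : ‖x 3‖ ≤ M := le_trans (le_max_right _ _) (le_max_left _ _)
  have m4 : ‖x 4‖ ≤ M := le_max_right _ _
  have hjM : ∀ j, ‖x j‖ ≤ M := by intro j; fin_cases j <;> assumption
  have hMlt : M < (p:ℝ)^r :=
    max_lt (max_lt (max_lt (max_lt (hlt 0) (hlt 1)) (hlt 2)) (hlt 3)) (hlt 4)
  have ht4M : ‖t 4‖ ≤ M := by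
    rw [← hxt]
    have expand : (k.adjugate.mulVec x) 4 =
        k.adjugate 4 0 * x 0 + k.adjugate 4 1 * x 1 + k.adjugate 4 2 * x 2 +
          k.adjugate 4 3 * x 3 + k.adjugate 4 4 * x 4 := by
      simp [Matrix.mulVec, dotProduct, Fin.sum_univ_five]
    rw [expand]
    have key : ∀ j, ‖k.adjugate 4 j * x j‖ ≤ M := by
      intro j
      rw [norm_mul]
      exact le_trans (mul_le_of_le_one_left (norm_nonneg _) (hadj.1.2.2 4 j)) (hjM j)
    exact norm5 p (key 0) (key 1) (key 2) (key 3) (key 4)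
  have ht4eq : ‖t 4‖ = (p:ℝ)^r := by show ‖c⁻¹‖ = _; exact hcinv
  rw [ht4eq] at ht4M
  linarith

theorem backward (hp2 : p ≠ 2) (θ : ℚ_[p]) (hθ : ‖θ‖ = 1) (x : Fin 5 → ℚ_[p])
    (hx : 2 * x 0 * x 4 + 2 * x 1 * x 3 + (x 2)^2 = 4 * θ) (r : ℕ)
    (hle : ∀ i, ‖x i‖ ≤ (p:ℝ)^r) (hex : ∃ i, ‖x i‖ = (p:ℝ)^r) :
    ∃ k ∈ Kgp p, k.mulVec ((dmat p r).mulVec ![2*θ, 0, 0, 1, 1]) = x := by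
  have hp1 : (1 : ℝ) < p := by exact_mod_cast (Fact.out : p.Prime).one_lt
  have hp0 : (0 : ℝ) < p := lt_trans one_pos hp1
  set c : ℚ_[p] := (p : ℚ_[p])^r with hc
  have hcne : c ≠ 0 :=
    pow_ne_zero _ (Nat.cast_ne_zero.2 (Fact.out : p.Prime).ne_zero)
  have hcnorm : ‖c‖ = (p : ℝ) ^ (-(r:ℤ)) := Padic.norm_p_pow r
  have hcancel : (p:ℝ)^(-(r:ℤ)) * (p:ℝ)^r = 1 := by
    rw [← zpow_natCast (p:ℝ) r, ← zpow_add₀ (ne_of_gt hp0)]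
    simp
  set y : Fin 5 → ℚ_[p] := c • x with hy
  have hyi : ∀ i, ‖y i‖ = (p:ℝ)^(-(r:ℤ)) * ‖x i‖ := by
    intro i
    rw [hy, Pi.smul_apply, smul_eq_mul, norm_mul, hcnorm]
  have hyint : ∀ i, ‖y i‖ ≤ 1 := by
    intro i
    rw [hyi i, ← hcancel]
    exact mul_le_mul_of_nonneg_left (hle i) (le_of_lt (zpow_pos hp0 _))
  have hyunit : ∃ i, ‖y i‖ = 1 := by
    obtain ⟨i, hi⟩ := hex
    exact ⟨i, by rw [hyi i, hi, hcancel]⟩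
  have hQy : Qf p y = c^2 * (4*θ) := by
    rw [hy]
    show 2 * (c * x 0) * (c * x 4) + 2 * (c * x 1) * (c * x 3) + (c * x 2)^2 = _
    linear_combination c^2 * hx
  obtain ⟨g, hg, hgy⟩ := red p hp2 y hyint hyunit
  rw [hQy] at hgy
  have hcninv : ‖(-c)‖ ≤ 1 := by
    rw [norm_neg, hcnorm]
    exact zpow_le_one_of_nonpos₀ (le_of_lt hp1) (by omega)
  have hBt : (matB p (-c)).mulVec ![c * (2*θ), 0, 0, 1, c⁻¹] = ![c * (2*θ), 0, 0, 0, c⁻¹] := by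
    rw [matB_mulVec]
    funext i
    fin_cases i <;> simp [Matrix.vecHead, Matrix.vecTail] <;> field_simp
  have hgx : g.mulVec x = ![c * (2*θ), 0, 0, 0, c⁻¹] := by
    funext i
    have h1 : c * (g.mulVec x) i = (![2⁻¹ * (c^2*(4*θ)), 0, 0, 0, 1] : Fin 5 → ℚ_[p]) i := by
      calc c * (g.mulVec x) i = (g.mulVec y) i := by
            rw [hy, Matrix.mulVec_smul]; rfl
        _ = _ := congrFun hgy i
    have h2 : (g.mulVec x) i = c⁻¹ * (![2⁻¹ * (c^2*(4*θ)), 0, 0, 0, 1] : Fin 5 → ℚ_[p]) i := by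
      rw [← h1, inv_mul_cancel_left₀ hcne]
    rw [h2]
    fin_cases i <;> simp [Matrix.vecHead, Matrix.vecTail] <;> field_simp <;> ring
  obtain ⟨hadjmem, hadjg, _⟩ := adj_mem p hg
  refine ⟨g.adjugate * matB p (-c), mul_mem p hadjmem (matB_mem p hcninv), ?_⟩
  rw [dvec, ← Matrix.mulVec_mulVec, hBt, ← hgx, Matrix.mulVec_mulVec, hadjg, Matrix.one_mulVec]


end St7

open St7 in
/-- non-split case: for a non-square unit `θ`, a point `x` of the
sphere `Q(v,v) = 4θ` lies in the `K`-orbit of `d_r·v₁` (with `v₁ = (2θ,0,0,1,1)`)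
iff `max ‖x_i‖ = p^r`; consequently `x` lies in exactly one orbit `K·(d_r·v₁)`. -/
theorem stmt_7 (hp : p ≠ 2) (θ : ℚ_[p]) (hθunit : ‖θ‖ = 1)
    (hθns : ¬ ∃ s : ℚ_[p], s ^ 2 = θ) (x : Fin 5 → ℚ_[p])
    (hx : 2 * x 0 * x 4 + 2 * x 1 * x 3 + (x 2) ^ 2 = 4 * θ) :
    (∀ r : ℕ,
      (∃ k ∈ Kgp p, k.mulVec ((dmat p r).mulVec ![2*θ, 0, 0, 1, 1]) = x) ↔
      ((∀ i, ‖x i‖ ≤ (p : ℝ) ^ r) ∧ ∃ i, ‖x i‖ = (p : ℝ) ^ r))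
    ∧ ∃! r : ℕ, ∃ k ∈ Kgp p, k.mulVec ((dmat p r).mulVec ![2*θ, 0, 0, 1, 1]) = x := by
  have hp1 : (1 : ℝ) < p := by exact_mod_cast (Fact.out : p.Prime).one_lt
  have hp0 : (0 : ℝ) < p := lt_trans one_pos hp1
  have hiff : ∀ r : ℕ,
      (∃ k ∈ Kgp p, k.mulVec ((dmat p r).mulVec ![2*θ, 0, 0, 1, 1]) = x) ↔
      ((∀ i, ‖x i‖ ≤ (p : ℝ) ^ r) ∧ ∃ i, ‖x i‖ = (p : ℝ) ^ r) := by
    intro r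
    constructor
    · rintro ⟨k, hk, hkx⟩
      exact forward p hp θ hθunit r x k hk hkx
    · rintro ⟨hle, hex⟩
      exact backward p hp θ hθunit x hx r hle hex
  refine ⟨hiff, ?_⟩
  obtain ⟨i, _, hmax'⟩ := Finset.exists_max_image Finset.univ (fun i => ‖x i‖)
    ⟨0, Finset.mem_univ 0⟩
  have hmax : ∀ j, ‖x j‖ ≤ ‖x i‖ := fun j => hmax' j (Finset.mem_univ j)
  have hone : (1:ℝ) ≤ ‖x i‖ := by
    by_contra hcon
    push_neg at hcon
    have hlt : ∀ j, ‖x j‖ < 1 := fun j => lt_of_le_of_lt (hmax j) hcon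
    have hprod : ∀ j l : Fin 5, ‖x j‖ * ‖x l‖ < 1 := by
      intro j l
      calc ‖x j‖ * ‖x l‖ ≤ ‖x j‖ * 1 :=
            mul_le_mul_of_nonneg_left (le_of_lt (hlt l)) (norm_nonneg _)
        _ = ‖x j‖ := mul_one _
        _ < 1 := hlt j
    have h1 : ‖(4:ℚ_[p]) * θ‖ = 1 := by
      rw [norm_mul, hθunit, mul_one, (by norm_num : (4:ℚ_[p]) = 2*2), norm_mul,
        norm_two p hp]
      norm_num
    have h2 : ‖2*x 0*x 4 + 2*x 1*x 3 + (x 2)^2‖ < 1 := by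
      refine lt_of_le_of_lt (Padic.nonarchimedean _ _)
        (max_lt (lt_of_le_of_lt (Padic.nonarchimedean _ _) (max_lt ?_ ?_)) ?_)
      · rw [mul_assoc, norm_mul, norm_two p hp, one_mul, norm_mul]
        exact hprod 0 4
      · rw [mul_assoc, norm_mul, norm_two p hp, one_mul, norm_mul]
        exact hprod 1 3
      · rw [sq, norm_mul]
        exact hprod 2 2
    rw [hx, h1] at h2
    exact lt_irrefl _ h2
  have hxi0 : x i ≠ 0 := by
    intro h
    rw [h, norm_zero] at hone
    linarith
  have hval : ‖x i‖ = (p:ℝ) ^ (-(x i).valuation) := Padic.norm_eq_zpow_neg_valuation hxi0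
  have hvnn : 0 ≤ -(x i).valuation := by
    by_contra hneg
    push_neg at hneg
    have hlt1 : (p:ℝ) ^ (-(x i).valuation) < (p:ℝ) ^ (0:ℤ) :=
      zpow_lt_zpow_right₀ hp1 hneg
    rw [zpow_zero] at hlt1
    rw [hval] at hone
    linarith
  set r : ℕ := (-(x i).valuation).toNat with hr
  have hnorm_r : ‖x i‖ = (p:ℝ) ^ r := by
    rw [hval, ← zpow_natCast (p:ℝ) r, hr, Int.toNat_of_nonneg hvnn]
  refine ⟨r, (hiff r).2 ⟨fun j => hnorm_r ▸ hmax j, ⟨i, hnorm_r⟩⟩, ?_⟩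
  intro r' hr'
  obtain ⟨hle', i', hi'⟩ := (hiff r').1 hr'
  have h1 : (p:ℝ)^r' ≤ (p:ℝ)^r := by
    rw [← hi', ← hnorm_r]
    exact hmax i'
  have h2 : (p:ℝ)^r ≤ (p:ℝ)^r' := by
    rw [← hnorm_r]
    exact hle' i
  exact pow_right_injective₀ hp0 (ne_of_gt hp1) (le_antisymm h1 h2)

end
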